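/- Let D : ℕ × ℕ → ℝ≥0 satisfy, for i decreasing from N−1 and j increasing (backward pipeline orientation): D(N−1,0) = 0; D(i,0) ≤ D(i+1,0) + Δ(i,0) for i < N−1; D(N−1,j) ≤ ∑_{k ∈ J(N−1,j)} w(k); and D(i,j) ≤ max{D(i+1,j), D(i,j−1)} + Δ(i,j) for i < N−1, j > 0. Assume J(i+1,j) ⊆ J(i,j), J(i,j−1) ⊆ J(i,j), and whenever Δ(i,j) > 0 there exists q ∈ J(i,j) \ (J(i+1,j) ∪ J(i,j−1)) with Δ(i,j) ≤ w(q). Then D(i,j) ≤ ∑_{k ∈ J(i,j)} w(k) for all i, j. -/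

import Mathlib

/-- Abstract induction behind the backward-delay lemma: delays of backward
pipeline tasks are bounded by the total weight of the inserted forward
microbatch sets `J`, by induction on `(N−1−i) + j`. -/
theorem backward_delay_induction (N : ℕ) (hN : 0 < N)
    (D Δ : ℕ × ℕ → NNReal) (J : ℕ × ℕ → Finset ℕ) (w : ℕ → NNReal)
    (hbase : D (N - 1, 0) = 0)
    (hcol : ∀ i, i + 1 < N → D (i, 0) ≤ D (i + 1, 0) + Δ (i, 0))
    (hlastrow : ∀ j, D (N - 1, j) ≤ ∑ k ∈ J (N - 1, j), w k)
    (hrec : ∀ i j, i + 1 < N → 1 ≤ j →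
      D (i, j) ≤ max (D (i + 1, j)) (D (i, j - 1)) + Δ (i, j))
    (hJ1 : ∀ i j, i + 1 < N → J (i + 1, j) ⊆ J (i, j))
    (hJ2 : ∀ i j, 1 ≤ j → J (i, j - 1) ⊆ J (i, j))
    (hcharge : ∀ i j, i + 1 < N → 0 < Δ (i, j) →
      ∃ q ∈ J (i, j), Δ (i, j) ≤ w q ∧ q ∉ J (i + 1, j) ∧ (1 ≤ j → q ∉ J (i, j - 1))) :
    ∀ i < N, ∀ j, D (i, j) ≤ ∑ k ∈ J (i, j), w k := by
  have key : ∀ m, ∀ i < N, ∀ j, (N - 1 - i) + j ≤ m → D (i, j) ≤ ∑ k ∈ J (i, j), w k := by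
    intro m
    induction m with
    | zero =>
      intro i hi j hm
      have hj : j = 0 := by omega
      have hii : i = N - 1 := by omega
      subst hj; rw [hii, hbase]; exact zero_le
    | succ m ih =>
      intro i hi j hm
      by_cases hlast : i = N - 1
      · subst hlast; exact hlastrow j
      · have hi1 : i + 1 < N := by omega
        have ihnext : D (i + 1, j) ≤ ∑ k ∈ J (i + 1, j), w k :=
          ih (i + 1) hi1 j (by omega)
        rcases Nat.eq_zero_or_pos j with hj | hj
        · subst hj
          have h1 := hcol i hi1
          by_cases hΔ : 0 < Δ (i, 0)
          · obtain ⟨q, hq, hwq, hq1, _⟩ := hcharge i 0 hi1 hΔ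
            calc D (i, 0) ≤ D (i + 1, 0) + Δ (i, 0) := h1
              _ ≤ (∑ k ∈ J (i + 1, 0), w k) + w q := add_le_add ihnext hwq
              _ = ∑ k ∈ insert q (J (i + 1, 0)), w k := by
                    rw [Finset.sum_insert hq1]; ring
              _ ≤ ∑ k ∈ J (i, 0), w k := Finset.sum_le_sum_of_subset (by
                    intro x hx
                    rcases Finset.mem_insert.mp hx with h | h
                    · exact h ▸ hq
                    · exact hJ1 i 0 hi1 h)
          · have hz : Δ (i, 0) = 0 := le_antisymm (not_lt.mp hΔ) (zero_le)
            calc D (i, 0) ≤ D (i + 1, 0) + Δ (i, 0) := h1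
              _ = D (i + 1, 0) := by rw [hz, add_zero]
              _ ≤ ∑ k ∈ J (i + 1, 0), w k := ihnext
              _ ≤ ∑ k ∈ J (i, 0), w k := Finset.sum_le_sum_of_subset (hJ1 i 0 hi1)
        · have ihprev : D (i, j - 1) ≤ ∑ k ∈ J (i, j - 1), w k :=
            ih i (by omega) (j - 1) (by omega)
          have hmax : max (D (i + 1, j)) (D (i, j - 1)) ≤
              ∑ k ∈ J (i + 1, j) ∪ J (i, j - 1), w k := by
            apply max_le
            · exact le_trans ihnext
                (Finset.sum_le_sum_of_subset Finset.subset_union_left)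
            · exact le_trans ihprev
                (Finset.sum_le_sum_of_subset Finset.subset_union_right)
          have hrec' := hrec i j hi1 hj
          by_cases hΔ : 0 < Δ (i, j)
          · obtain ⟨q, hq, hwq, hq1, hq2⟩ := hcharge i j hi1 hΔ
            have hqnot : q ∉ J (i + 1, j) ∪ J (i, j - 1) := by
              simp only [Finset.mem_union, not_or]
              exact ⟨hq1, hq2 hj⟩
            calc D (i, j) ≤ max (D (i + 1, j)) (D (i, j - 1)) + Δ (i, j) := hrec'
              _ ≤ (∑ k ∈ J (i + 1, j) ∪ J (i, j - 1), w k) + w q := add_le_add hmax hwq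
              _ = ∑ k ∈ insert q (J (i + 1, j) ∪ J (i, j - 1)), w k := by
                    rw [Finset.sum_insert hqnot]; ring
              _ ≤ ∑ k ∈ J (i, j), w k := Finset.sum_le_sum_of_subset (by
                    intro x hx
                    rcases Finset.mem_insert.mp hx with h | h
                    · exact h ▸ hq
                    · rcases Finset.mem_union.mp h with h | h
                      · exact hJ1 i j hi1 h
                      · exact hJ2 i j hj h)
          · have hz : Δ (i, j) = 0 := le_antisymm (not_lt.mp hΔ) (zero_le)
            calc D (i, j) ≤ max (D (i + 1, j)) (D (i, j - 1)) + Δ (i, j) := hrec'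
              _ = max (D (i + 1, j)) (D (i, j - 1)) := by rw [hz, add_zero]
              _ ≤ ∑ k ∈ J (i + 1, j) ∪ J (i, j - 1), w k := hmax
              _ ≤ ∑ k ∈ J (i, j), w k := Finset.sum_le_sum_of_subset
                    (Finset.union_subset (hJ1 i j hi1) (hJ2 i j hj))
  intro i hi j
  exact key _ i hi j le_rfl
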